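/- Let C be an abelian category and M an object of finite length N with simple composition factors M_1, …, M_N. Suppose D : C → C is an exact contravariant functor (duality) such that D(S) is injective in C for every simple object S appearing as a composition factor of M. Then D(M) is isomorphic to the direct sum ⨁_{i=1}^N D(M_i). -/
import Mathlib


open CategoryTheory CategoryTheory.Limits

attribute [local instance] CategoryTheory.Abelian.hasFiniteBiproducts
noncomputable def biproductFinSuccIso {C : Type*} [Category C] [Preadditive C]
    [HasFiniteBiproducts C] [HasBinaryBiproducts C] {n : ℕ} (h : Fin (n + 1) → C) :
    (⨁ h) ≅ h (Fin.last n) ⊞ ⨁ (fun i : Fin n => h i.castSucc) where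
  hom := biprod.lift (biproduct.π h (Fin.last n))
    (biproduct.lift fun i : Fin n => biproduct.π h i.castSucc)
  inv := biprod.desc (biproduct.ι h (Fin.last n))
    (biproduct.desc fun i : Fin n => biproduct.ι h i.castSucc)
  hom_inv_id := by
    ext j j'
    by_cases hj : j = j'
    · subst hj
      rcases Fin.eq_castSucc_or_eq_last j with ⟨i, rfl⟩ | rfl <;>
        simp [biproduct.lift_desc, Preadditive.comp_sum, Preadditive.sum_comp,
          biproduct.ι_π_assoc, biproduct.ι_π, Fin.ext_iff, (Fin.castSucc_lt_last _).ne,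
          (Fin.castSucc_lt_last _).ne']
      rw [Finset.sum_eq_single i]
      · simp
      · intro x _ hx
        rw [dif_neg (fun hh => hx (Fin.val_injective hh).symm)]
        simp
      · simp
    · rcases Fin.eq_castSucc_or_eq_last j with ⟨i, rfl⟩ | rfl <;>
        rcases Fin.eq_castSucc_or_eq_last j' with ⟨i', rfl⟩ | rfl <;>
        simp_all [biproduct.lift_desc, Preadditive.comp_sum, Preadditive.sum_comp,
          biproduct.ι_π_assoc, biproduct.ι_π, Fin.ext_iff, (Fin.castSucc_lt_last _).ne,
          (Fin.castSucc_lt_last _).ne']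
      rw [dif_neg (fun hh : (i' : ℕ) = (i : ℕ) => hj (by omega)), Finset.sum_eq_zero]
      intro x _
      by_cases hx : (i' : ℕ) = (x : ℕ)
      · rw [dif_neg (fun hh : (x : ℕ) = (i : ℕ) => hj (by omega))]
        simp
      · rw [dif_neg hx]
        simp
  inv_hom_id := by
    ext <;> simp [biproduct.ι_π, Fin.ext_iff, (Fin.castSucc_lt_last _).ne,
      (Fin.castSucc_lt_last _).ne']

open Opposite in
lemma dual_step {C : Type*} [Category C] [Abelian C]
    (D : Cᵒᵖ ⥤ C) [PreservesFiniteLimits D] [PreservesFiniteColimits D]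
    {X Y : C} (g : X ⟶ Y) [Mono g]
    [Injective (D.obj (op (cokernel g)))] :
    Nonempty (D.obj (op Y) ≅ D.obj (op (cokernel g)) ⊞ D.obj (op X)) := by
  haveI : HasBinaryBiproducts C := hasBinaryBiproducts_of_finite_biproducts C
  haveI : D.Additive := Functor.additive_of_preserves_binary_products D
  let S : ShortComplex C := ShortComplex.mk g (cokernel.π g) (cokernel.condition g)
  have hS : S.ShortExact :=
    { exact := S.exact_of_g_is_cokernel (cokernelIsCokernel g)
      mono_f := by dsimp [S]; infer_instance
      epi_g := by dsimp [S]; infer_instance }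
  have hDand : PreservesFiniteLimits D ∧ PreservesFiniteColimits D :=
    ⟨inferInstance, inferInstance⟩
  have h30 := (Functor.exact_tfae D).out 3 0
  have hT : (S.op.map D).ShortExact := h30.1 hDand S.op hS.op
  haveI hinj : Injective (S.op.map D).X₁ := by
    dsimp [S, ShortComplex.op, ShortComplex.map]; infer_instance
  have e : (S.op.map D).X₂ ≅ (S.op.map D).X₁ ⊞ (S.op.map D).X₃ :=
    hT.splittingOfInjective.isoBinaryBiproduct
  exact Nonempty.intro e

open Opposite in
lemma dual_iso_aux {C : Type*} [Category C] [Abelian C]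
    (D : Cᵒᵖ ⥤ C) [PreservesFiniteLimits D] [PreservesFiniteColimits D] :
    ∀ (N : ℕ) (F : Fin (N + 1) → C) (f : ∀ i : Fin N, F i.castSucc ⟶ F i.succ),
    (∀ i, Mono (f i)) → IsZero (F 0) →
    (∀ i, Injective (D.obj (op (cokernel (f i))))) →
    Nonempty (D.obj (op (F (Fin.last N))) ≅ ⨁ fun i : Fin N => D.obj (op (cokernel (f i)))) := by
  haveI : HasBinaryBiproducts C := hasBinaryBiproducts_of_finite_biproducts C
  intro N
  induction N with
  | zero =>
    intro F f _ hF0 _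
    refine ⟨IsZero.iso ?_ ?_⟩
    · exact D.map_isZero hF0.op
    · rw [IsZero.iff_id_eq_zero]
      apply biproduct.hom_ext
      intro j
      exact j.elim0
  | succ N ih =>
    intro F f hmono hF0 hinj
    obtain ⟨e₁⟩ := ih (fun i => F i.castSucc) (fun i => f i.castSucc)
      (fun i => hmono i.castSucc) hF0 (fun i => hinj i.castSucc)
    haveI := hmono (Fin.last N)
    haveI := hinj (Fin.last N)
    obtain ⟨e₂⟩ := dual_step D (f (Fin.last N))
    exact ⟨(e₂ ≪≫ biprod.mapIso (Iso.refl _) e₁ ≪≫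
      (biproductFinSuccIso (fun i : Fin (N + 1) => D.obj (op (cokernel (f i))))).symm :)⟩

/-- Let `M` be an object of an abelian category of finite length `N`, presented by a
filtration `0 ≅ F 0 ↪ F 1 ↪ ⋯ ↪ F N = M` whose successive quotients (the composition
factors) are simple.  Let `D : Cᵒᵖ ⥤ C` be an exact contravariant functor such that
`D (R i)` is injective for every composition factor `R i = coker (F i ↪ F (i+1))`.
Then `D M ≅ ⨁ᵢ D (R i)`. -/
theorem dual_iso_biproduct_of_injective_dual_constituents
    {C : Type*} [Category C] [Abelian C]
    (D : Cᵒᵖ ⥤ C) [PreservesFiniteLimits D] [PreservesFiniteColimits D]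
    (N : ℕ) (F : Fin (N + 1) → C) (f : ∀ i : Fin N, F i.castSucc ⟶ F i.succ)
    [∀ i, Mono (f i)]
    (hF0 : IsZero (F 0))
    (M : C) (hM : F (Fin.last N) ≅ M)
    (hsimple : ∀ i : Fin N, Simple (cokernel (f i)))
    (hinj : ∀ i : Fin N, Injective (D.obj (Opposite.op (cokernel (f i))))) :
    Nonempty (D.obj (Opposite.op M) ≅ ⨁ fun i : Fin N => D.obj (Opposite.op (cokernel (f i)))) := by
  obtain ⟨e⟩ := dual_iso_aux D N F f inferInstance hF0 hinj
  exact ⟨D.mapIso hM.op ≪≫ e⟩
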